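/- Cesàro limit of expected cone-type visit counts: assume α > 1, let m be the unique positive real with Σᵣ k⁺(r)/(m + k⁻(r)) = 1, and set σ̄ᵢ = k⁺(i)/(m + k⁻(i)). For each i ∈ Fin d and n ∈ ℕ define Eᵢ(n) = Σ_{ℓ=0}^{n} Σ_{x ∈ 𝒯} pˡ(o, x·i) (a finite quantity, being the expected number of visits during the first n+1 steps to states whose last letter is i). Then lim_{n→∞} Eᵢ(n)/n = σ̄ᵢ·(k⁻(i) + K) / (Σⱼ σ̄ⱼ·(k⁻(j) + K)). -/

import Mathlib

open Filter

namespace Stmt12Aux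

def TS (d ℓ : ℕ) : Finset (List (Fin d)) :=
  (Finset.range (ℓ + 1)).biUnion fun k => Finset.univ.image (List.ofFn (n := k))

lemma mem_TS {d ℓ : ℕ} {y : List (Fin d)} (h : y.length ≤ ℓ) : y ∈ TS d ℓ := by
  refine Finset.mem_biUnion.2 ⟨y.length, Finset.mem_range.2 (Nat.lt_succ_of_le h), ?_⟩
  exact Finset.mem_image.2 ⟨y.get, Finset.mem_univ _, List.ofFn_get y⟩

lemma length_le_of_mem_TS {d ℓ : ℕ} {y : List (Fin d)} (h : y ∈ TS d ℓ) : y.length ≤ ℓ := by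
  rcases Finset.mem_biUnion.1 h with ⟨k, hk, hy⟩
  rcases Finset.mem_image.1 hy with ⟨f, _, rfl⟩
  simpa using Nat.lt_succ_iff.mp (Finset.mem_range.1 hk)

lemma TS_mono {d ℓ ℓ' : ℕ} (h : ℓ ≤ ℓ') : TS d ℓ ⊆ TS d ℓ' := fun y hy =>
  mem_TS ((length_le_of_mem_TS hy).trans h)

lemma concat_inj {α : Type*} {x y : List α} {a b : α} (h : x ++ [a] = y ++ [b]) :
    x = y ∧ a = b := by
  have hx : x = y := by
    have := congrArg List.dropLast h
    simpa [List.dropLast_concat] using this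
  subst hx
  exact ⟨rfl, by simpa using List.append_cancel_left h⟩

def polyF {α : Type*} (φ ρ : α → ℝ) : List α → ℝ
  | [] => 0
  | j :: s => φ j + ρ j * polyF φ ρ s

lemma polyF_bound {α : Type*} (φ ρ : α → ℝ) (M q : ℝ) (hM : ∀ j, |φ j| ≤ M)
    (hρ0 : ∀ j, 0 ≤ ρ j) (hρq : ∀ j, ρ j ≤ q) (hq : q < 1) (hM0 : 0 ≤ M) :
    ∀ s : List α, |polyF φ ρ s| ≤ M / (1 - q) := by
  have h1q : 0 < 1 - q := by linarith
  intro s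
  induction s with
  | nil => simpa [polyF] using div_nonneg hM0 h1q.le
  | cons j s ih =>
    have h2 : |ρ j * polyF φ ρ s| = ρ j * |polyF φ ρ s| := by
      rw [abs_mul, abs_of_nonneg (hρ0 j)]
    have h3 : ρ j * |polyF φ ρ s| ≤ q * (M / (1 - q)) :=
      mul_le_mul (hρq j) ih (abs_nonneg _) ((hρ0 j).trans (hρq j))
    have h4 : M + q * (M / (1 - q)) = M / (1 - q) := by field_simp; ring
    calc |polyF φ ρ (j :: s)| = |φ j + ρ j * polyF φ ρ s| := rfl
      _ ≤ |φ j| + |ρ j * polyF φ ρ s| := abs_add_le _ _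
      _ ≤ M + q * (M / (1 - q)) := by rw [h2]; exact add_le_add (hM j) h3
      _ = M / (1 - q) := h4

end Stmt12Aux

open Stmt12Aux


/-- Cesàro limit of expected cone-type visit counts: assume
`α = Σ i, k⁺ i / k⁻ i > 1`, let `m` be the unique positive real with
`Σ r, k⁺ r / (m + k⁻ r) = 1`, and set `σ̄ i = k⁺ i / (m + k⁻ i)`.  For `i : Fin d` and
`n : ℕ` let `Eᵢ(n) = Σ_{ℓ=0}^{n} Σ_{x} pˡ(o, x·i)` (the expected number of visits during
the first `n+1` steps to states whose last letter is `i`).  Then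
`Eᵢ(n)/n → σ̄ i (k⁻ i + K) / Σ j, σ̄ j (k⁻ j + K)` as `n → ∞`. -/
theorem stmt12 (d : ℕ) (hd : 1 ≤ d) (kp km : Fin d → ℝ)
    (hkp : ∀ i, 0 < kp i) (hkm : ∀ i, 0 < km i)
    (K : ℝ) (hK : K = ∑ i : Fin d, kp i)
    (hα : 1 < ∑ i : Fin d, kp i / km i)
    (m : ℝ) (hm : 0 < m) (hmeq : ∑ r : Fin d, kp r / (m + km r) = 1)
    (σ : Fin d → ℝ) (hσ : ∀ i, σ i = kp i / (m + km i))
    (p : List (Fin d) → List (Fin d) → ℝ)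
    (hp_root : ∀ i : Fin d, p [] [i] = kp i / K)
    (hp_up : ∀ (x : List (Fin d)) (i j : Fin d),
      p (x ++ [i]) (x ++ [i] ++ [j]) = kp j / (km i + K))
    (hp_down : ∀ (x : List (Fin d)) (i : Fin d), p (x ++ [i]) x = km i / (km i + K))
    (hp_zero : ∀ x y : List (Fin d),
      (¬ ∃ i : Fin d, y = x ++ [i]) → (¬ ∃ i : Fin d, x = y ++ [i]) → p x y = 0)
    (pn : ℕ → List (Fin d) → List (Fin d) → ℝ)
    (hpn0 : ∀ x y : List (Fin d), pn 0 x y = if x = y then 1 else 0)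
    (hpns : ∀ (n : ℕ) (x y : List (Fin d)),
      pn (n + 1) x y = ∑' z : List (Fin d), pn n x z * p z y) :
    ∀ i : Fin d,
      Tendsto
        (fun n : ℕ =>
          (∑ ℓ ∈ Finset.range (n + 1), ∑' x : List (Fin d), pn ℓ [] (x ++ [i])) / (n : ℝ))
        atTop
        (nhds (σ i * (km i + K) / ∑ j : Fin d, σ j * (km j + K))) := by
  classical
  intro i
  haveI hne : Nonempty (Fin d) := ⟨⟨0, hd⟩⟩
  have hK0 : 0 < K := by
    rw [hK]; exact Finset.sum_pos (fun j _ => hkp j) Finset.univ_nonempty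
  have hmk : ∀ j : Fin d, 0 < m + km j := fun j => by linarith [hkm j]
  have hkK : ∀ j : Fin d, 0 < km j + K := fun j => by linarith [hkm j]
  -- algebraic preliminaries
  have hKm : ∑ r : Fin d, kp r * km r / (m + km r) = K - m := by
    have h1 : ∀ r : Fin d, kp r * km r / (m + km r) = kp r - m * (kp r / (m + km r)) := by
      intro r
      have h0 : m + km r ≠ 0 := (hmk r).ne'
      field_simp
      ring
    rw [Finset.sum_congr rfl fun r _ => h1 r, Finset.sum_sub_distrib, ← Finset.mul_sum, hmeq, hK]
    ring
  have hS : (∑ j : Fin d, σ j * (km j + K)) = 2 * K - m := by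
    have h1 : ∀ j : Fin d, σ j * (km j + K)
        = kp j * km j / (m + km j) + K * (kp j / (m + km j)) := by
      intro j
      rw [hσ j]
      have h0 : m + km j ≠ 0 := (hmk j).ne'
      field_simp
    rw [Finset.sum_congr rfl fun j _ => h1 j, Finset.sum_add_distrib, hKm, ← Finset.mul_sum, hmeq]
    ring
  have hmK : m < K := by
    have h1 : ∑ r : Fin d, kp r / (m + km r) < ∑ r : Fin d, kp r / m := by
      apply Finset.sum_lt_sum_of_nonempty Finset.univ_nonempty
      intro r _
      apply div_lt_div_of_pos_left (hkp r) hm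
      linarith [hkm r]
    rw [hmeq] at h1
    have h2 : ∑ r : Fin d, kp r / m = K / m := by rw [← Finset.sum_div, hK]
    rw [h2, lt_div_iff₀ hm, one_mul] at h1
    exact h1
  have hS0 : (0:ℝ) < ∑ j : Fin d, σ j * (km j + K) := by rw [hS]; linarith
  set c : ℝ := σ i * (km i + K) / ∑ j : Fin d, σ j * (km j + K) with hc_def
  have hc : c * (2 * K - m) = kp i * (km i + K) / (m + km i) := by
    rw [hc_def, hS, div_mul_cancel₀ _ (by linarith : (2:ℝ) * K - m ≠ 0), hσ]
    ring
  set φ : Fin d → ℝ := fun j => (c * km j - (if j = i then km j + K else 0)) / (m + km j)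
    with hφ_def
  set ρ : Fin d → ℝ := fun j => km j / (m + km j) with hρ_def
  have hR : ∑ r : Fin d, kp r * ρ r = K - m := by
    rw [← hKm]
    apply Finset.sum_congr rfl
    intro r _
    rw [hρ_def]
    ring
  have hΦ : ∑ r : Fin d, kp r * φ r = -(c * K) := by
    have h1 : ∀ r : Fin d, kp r * φ r
        = c * (kp r * km r / (m + km r))
          - (if r = i then kp r * (km r + K) / (m + km r) else 0) := by
      intro r
      have h0 : m + km r ≠ 0 := (hmk r).ne'
      rw [hφ_def]
      by_cases h : r = i
      · subst h
        simp only [if_pos rfl, eq_self_iff_true, if_true]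
        field_simp
      · simp only [if_neg h]
        field_simp
        ring
    rw [Finset.sum_congr rfl fun r _ => h1 r, Finset.sum_sub_distrib, ← Finset.mul_sum, hKm,
      Finset.sum_ite_eq' Finset.univ i _, if_pos (Finset.mem_univ i)]
    have h2 : kp i * (km i + K) / (m + km i) = c * (2 * K - m) := hc.symm
    rw [h2]
    ring
  -- the key pointwise algebraic identity
  have key : ∀ (j : Fin d) (t : ℝ),
      km j / (km j + K) * t
        + ∑ r : Fin d, kp r / (km j + K) * (φ r + ρ r * (φ j + ρ j * t))
      = (φ j + ρ j * t) + ((if j = i then (1:ℝ) else 0) - c) := by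
    intro j t
    have hsum : ∑ r : Fin d, kp r / (km j + K) * (φ r + ρ r * (φ j + ρ j * t))
        = (∑ r : Fin d, kp r * φ r) / (km j + K)
          + (∑ r : Fin d, kp r * ρ r) * (φ j + ρ j * t) / (km j + K) := by
      rw [Finset.sum_div, Finset.sum_mul, Finset.sum_div, ← Finset.sum_add_distrib]
      apply Finset.sum_congr rfl
      intro r _
      ring
    rw [hsum, hΦ, hR]
    simp only [hφ_def, hρ_def]
    have h0 : m + km j ≠ 0 := (hmk j).ne'
    have h1 : km j + K ≠ 0 := (hkK j).ne'
    by_cases h : j = i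
    · subst h
      simp only [if_pos rfl, eq_self_iff_true, if_true]
      field_simp
      ring
    · simp only [if_neg h]
      field_simp
      ring
  -- list decomposition
  have hdec : ∀ z : List (Fin d), z = [] ∨ ∃ x j, z = x ++ [j] := by
    intro z
    rcases List.eq_nil_or_concat z with h | ⟨x, j, h⟩
    · exact Or.inl h
    · exact Or.inr ⟨x, j, by simpa [List.concat_eq_append] using h⟩
  have hp_nonneg : ∀ z y : List (Fin d), 0 ≤ p z y := by
    intro z y
    by_cases h1 : ∃ r : Fin d, y = z ++ [r]
    · obtain ⟨r, rfl⟩ := h1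
      rcases hdec z with rfl | ⟨x, j, rfl⟩
      · rw [List.nil_append, hp_root]
        exact div_nonneg (hkp r).le hK0.le
      · rw [hp_up]
        exact div_nonneg (hkp r).le (hkK j).le
    · by_cases h2 : ∃ r : Fin d, z = y ++ [r]
      · obtain ⟨r, rfl⟩ := h2
        rw [hp_down]
        exact div_nonneg (hkm r).le (hkK r).le
      · rw [hp_zero _ _ h1 h2]
  have hp_sup : ∀ z y : List (Fin d), p z y ≠ 0 →
      (∃ r : Fin d, y = z ++ [r]) ∨ (∃ r : Fin d, z = y ++ [r]) := by
    intro z y h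
    by_contra hcon
    rw [not_or] at hcon
    exact h (hp_zero _ _ hcon.1 hcon.2)
  -- support of pn
  have hsupp : ∀ (ℓ : ℕ) (y : List (Fin d)), ℓ < y.length → pn ℓ [] y = 0 := by
    intro ℓ
    induction ℓ with
    | zero =>
      intro y hy
      rw [hpn0, if_neg]
      intro h
      rw [← h] at hy
      simp at hy
    | succ n ih =>
      intro y hy
      rw [hpns]
      have hzero : ∀ z : List (Fin d), pn n [] z * p z y = 0 := by
        intro z
        by_cases hz : n < z.length
        · rw [ih z hz, zero_mul]
        · push_neg at hz
          have hpzy : p z y = 0 := by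
            by_contra hne0
            rcases hp_sup z y hne0 with ⟨r, rfl⟩ | ⟨r, rfl⟩
            · simp only [List.length_append, List.length_singleton] at hy
              omega
            · simp only [List.length_append, List.length_singleton] at hz
              omega
          rw [hpzy, mul_zero]
      rw [tsum_congr hzero, tsum_zero]
  have hpn_nonneg : ∀ (ℓ : ℕ) (y : List (Fin d)), 0 ≤ pn ℓ [] y := by
    intro ℓ
    induction ℓ with
    | zero =>
      intro y
      rw [hpn0]
      split <;> norm_num
    | succ n ih =>
      intro y
      rw [hpns]
      exact tsum_nonneg fun z => mul_nonneg (ih z) (hp_nonneg z y)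
  -- tsum to finite sum
  have hfin : ∀ (ℓ : ℕ) (g : List (Fin d) → ℝ),
      ∑' y : List (Fin d), pn ℓ [] y * g y = ∑ y ∈ TS d ℓ, pn ℓ [] y * g y := by
    intro ℓ g
    apply tsum_eq_sum
    intro y hy
    have hlen : ℓ < y.length := by
      by_contra h
      push_neg at h
      exact hy (mem_TS h)
    rw [hsupp ℓ y hlen, zero_mul]
  -- row evaluations
  have hProw0 : ∀ g : List (Fin d) → ℝ,
      ∑' y : List (Fin d), p [] y * g y = ∑ r : Fin d, kp r / K * g [r] := by
    intro g
    have hset : ∀ y ∉ Finset.univ.image (fun r : Fin d => ([r] : List (Fin d))),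
        p [] y * g y = 0 := by
      intro y hy
      have hz : p [] y = 0 := by
        by_contra h
        rcases hp_sup _ _ h with ⟨r, rfl⟩ | ⟨r, hr⟩
        · exact hy (Finset.mem_image.2 ⟨r, Finset.mem_univ _, by simp⟩)
        · simp at hr
      rw [hz, zero_mul]
    rw [tsum_eq_sum hset, Finset.sum_image (by intro a _ b _ h; simpa using h)]
    apply Finset.sum_congr rfl
    intro r _
    rw [hp_root]
  have hProwC : ∀ (x : List (Fin d)) (j : Fin d) (g : List (Fin d) → ℝ),
      ∑' y : List (Fin d), p (x ++ [j]) y * g y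
        = km j / (km j + K) * g x
          + ∑ r : Fin d, kp r / (km j + K) * g (x ++ [j] ++ [r]) := by
    intro x j g
    have hxnot : x ∉ Finset.univ.image (fun r : Fin d => x ++ [j] ++ [r]) := by
      simp only [Finset.mem_image]
      rintro ⟨r, -, hr⟩
      have := congrArg List.length hr
      simp at this
    have hset : ∀ y ∉ insert x (Finset.univ.image (fun r : Fin d => x ++ [j] ++ [r])),
        p (x ++ [j]) y * g y = 0 := by
      intro y hy
      have hz : p (x ++ [j]) y = 0 := by
        by_contra h
        rcases hp_sup _ _ h with ⟨r, rfl⟩ | ⟨r, hr⟩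
        · exact hy (Finset.mem_insert.2 (Or.inr (Finset.mem_image.2 ⟨r, Finset.mem_univ _, rfl⟩)))
        · exact hy (Finset.mem_insert.2 (Or.inl (concat_inj hr).1.symm))
      rw [hz, zero_mul]
    rw [tsum_eq_sum hset, Finset.sum_insert hxnot, hp_down,
      Finset.sum_image (by intro a _ b _ h; exact by simpa using (concat_inj h).2)]
    congr 1
    apply Finset.sum_congr rfl
    intro r _
    rw [hp_up]
  -- Chapman–Kolmogorov (finite form)
  have hchap : ∀ (ℓ : ℕ) (g : List (Fin d) → ℝ),
      ∑' y : List (Fin d), pn (ℓ + 1) [] y * g y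
        = ∑ z ∈ TS d ℓ, pn ℓ [] z * ∑' y : List (Fin d), p z y * g y := by
    intro ℓ g
    rw [hfin (ℓ + 1) g]
    have step1 : ∀ y ∈ TS d (ℓ + 1),
        pn (ℓ + 1) [] y * g y = (∑ z ∈ TS d ℓ, pn ℓ [] z * p z y) * g y := by
      intro y _
      rw [hpns]
      congr 1
      apply tsum_eq_sum
      intro z hz
      have hlen : ℓ < z.length := by
        by_contra h
        push_neg at h
        exact hz (mem_TS h)
      rw [hsupp ℓ z hlen, zero_mul]
    rw [Finset.sum_congr rfl step1]
    simp only [Finset.sum_mul]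
    rw [Finset.sum_comm]
    apply Finset.sum_congr rfl
    intro z hz
    have hz' : z.length ≤ ℓ := length_le_of_mem_TS hz
    have heval : ∑' y : List (Fin d), p z y * g y = ∑ y ∈ TS d (ℓ + 1), p z y * g y := by
      apply tsum_eq_sum
      intro y hy
      have hz0 : p z y = 0 := by
        by_contra h
        rcases hp_sup _ _ h with ⟨r, rfl⟩ | ⟨r, rfl⟩
        · exact hy (mem_TS (by simp only [List.length_append, List.length_singleton]; omega))
        · simp only [List.length_append, List.length_singleton] at hz'
          exact hy (mem_TS (by omega))
      rw [hz0, zero_mul]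
    rw [heval, Finset.mul_sum]
    apply Finset.sum_congr rfl
    intro y _
    ring
  -- row sums equal 1
  have hrow1 : ∀ z : List (Fin d), ∑' y : List (Fin d), p z y = 1 := by
    intro z
    rcases hdec z with rfl | ⟨x, j, rfl⟩
    · have h1 := hProw0 fun _ => (1:ℝ)
      simp only [mul_one] at h1
      rw [h1, ← Finset.sum_div, ← hK, div_self hK0.ne']
    · have h1 := hProwC x j fun _ => (1:ℝ)
      simp only [mul_one] at h1
      rw [h1, ← Finset.sum_div, ← hK, ← add_div, div_self (hkK j).ne']
  -- total mass 1
  have hmass : ∀ ℓ : ℕ, ∑ y ∈ TS d ℓ, pn ℓ [] y = 1 := by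
    intro ℓ
    induction ℓ with
    | zero =>
      have h1 := hfin 0 fun _ => (1:ℝ)
      have h2 : ∑' y : List (Fin d), pn 0 [] y * 1 = 1 := by
        rw [tsum_eq_single ([] : List (Fin d))]
        · rw [hpn0, if_pos rfl, mul_one]
        · intro y hy
          rw [hpn0, if_neg fun h => hy h.symm, zero_mul]
      simp only [mul_one] at h1 h2
      rw [← h1, h2]
    | succ n ih =>
      have h1 := hchap n fun _ => (1:ℝ)
      have h3 := hfin (n + 1) fun _ => (1:ℝ)
      simp only [mul_one] at h1 h3
      rw [← h3, h1, Finset.sum_congr rfl fun z _ => by rw [hrow1 z, mul_one], ih]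
  -- the bounded Poisson solution f
  set f : List (Fin d) → ℝ := fun x => polyF φ ρ x.reverse with hf_def
  have hfnil : f [] = 0 := rfl
  have hfconcat : ∀ (x : List (Fin d)) (j : Fin d), f (x ++ [j]) = φ j + ρ j * f x := by
    intro x j
    simp only [hf_def, List.reverse_append, List.reverse_singleton, List.singleton_append]
    rfl
  set M : ℝ := ∑ r : Fin d, |φ r| with hM_def
  have hMb : ∀ j : Fin d, |φ j| ≤ M :=
    fun j => Finset.single_le_sum (fun r _ => abs_nonneg (φ r)) (Finset.mem_univ j)
  have hM0 : 0 ≤ M := Finset.sum_nonneg fun r _ => abs_nonneg _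
  have hρ0 : ∀ j : Fin d, 0 ≤ ρ j := by
    intro j
    rw [hρ_def]
    exact div_nonneg (hkm j).le (hmk j).le
  have hρlt : ∀ j : Fin d, ρ j < 1 := by
    intro j
    rw [hρ_def]
    rw [div_lt_one (hmk j)]
    linarith [hkm j]
  set q : ℝ := Finset.univ.sup' Finset.univ_nonempty ρ with hq_def
  have hq1 : q < 1 := by
    rw [hq_def, Finset.sup'_lt_iff]
    exact fun j _ => hρlt j
  have hqb : ∀ j : Fin d, ρ j ≤ q := fun j => Finset.le_sup' ρ (Finset.mem_univ j)
  set C : ℝ := M / (1 - q) with hC_def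
  have hfb : ∀ x : List (Fin d), |f x| ≤ C :=
    fun x => polyF_bound φ ρ M q hMb hρ0 hqb hq1 hM0 x.reverse
  -- pointwise Poisson identity
  have hPois : ∀ z : List (Fin d),
      ∑' y : List (Fin d), p z y * f y
        = f z + ((if ∃ x : List (Fin d), z = x ++ [i] then (1:ℝ) else 0) - c) := by
    intro z
    rcases hdec z with rfl | ⟨x, j, rfl⟩
    · rw [hProw0 f]
      have h1 : ∑ r : Fin d, kp r / K * f [r] = (∑ r : Fin d, kp r * φ r) / K := by
        rw [Finset.sum_div]
        apply Finset.sum_congr rfl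
        intro r _
        have : f [r] = φ r := by
          have h2 := hfconcat [] r
          simpa [hfnil] using h2
        rw [this]
        ring
      have hno : ¬ ∃ x : List (Fin d), ([] : List (Fin d)) = x ++ [i] := by
        rintro ⟨x, hx⟩
        exact (List.append_ne_nil_of_right_ne_nil x (by simp : ([i] : List (Fin d)) ≠ [])) hx.symm
      rw [h1, hΦ, if_neg hno, hfnil]
      field_simp
      ring
    · rw [hProwC x j f, hfconcat x j,
        Finset.sum_congr rfl fun r _ => by rw [hfconcat (x ++ [j]) r, hfconcat x j]]
      have he : (if ∃ x' : List (Fin d), x ++ [j] = x' ++ [i] then (1:ℝ) else 0)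
          = (if j = i then (1:ℝ) else 0) := by
        by_cases h : j = i
        · rw [if_pos h, if_pos ⟨x, by rw [h]⟩]
        · rw [if_neg h, if_neg]
          rintro ⟨x', hx⟩
          exact h (concat_inj hx).2
      rw [he]
      exact key j (f x)
  -- visit probabilities
  have hAfin : ∀ ℓ : ℕ, (∑' x : List (Fin d), pn ℓ [] (x ++ [i]))
      = ∑ x ∈ TS d ℓ, pn ℓ [] (x ++ [i]) := by
    intro ℓ
    apply tsum_eq_sum
    intro x hx
    have hlen : ℓ < x.length := by
      by_contra h
      push_neg at h
      exact hx (mem_TS h)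
    apply hsupp
    simp only [List.length_append, List.length_singleton]
    omega
  have hEA : ∀ ℓ : ℕ,
      ∑ z ∈ TS d ℓ, pn ℓ [] z * (if ∃ x : List (Fin d), z = x ++ [i] then (1:ℝ) else 0)
        = ∑' x : List (Fin d), pn ℓ [] (x ++ [i]) := by
    intro ℓ
    rw [hAfin ℓ]
    have himg : (TS d ℓ).image (fun x => x ++ [i]) ⊆ TS d (ℓ + 1) := by
      intro z hz
      rcases Finset.mem_image.1 hz with ⟨x, hx, rfl⟩
      apply mem_TS
      have := length_le_of_mem_TS hx
      simp only [List.length_append, List.length_singleton]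
      omega
    have e1 : ∑ z ∈ TS d ℓ, pn ℓ [] z * (if ∃ x : List (Fin d), z = x ++ [i] then (1:ℝ) else 0)
        = ∑ z ∈ TS d (ℓ + 1),
            pn ℓ [] z * (if ∃ x : List (Fin d), z = x ++ [i] then (1:ℝ) else 0) := by
      apply Finset.sum_subset (TS_mono (Nat.le_succ ℓ))
      intro z _ hz2
      have hlen : ℓ < z.length := by
        by_contra h
        push_neg at h
        exact hz2 (mem_TS h)
      rw [hsupp ℓ z hlen, zero_mul]
    have e2 : ∑ z ∈ (TS d ℓ).image (fun x => x ++ [i]),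
          pn ℓ [] z * (if ∃ x : List (Fin d), z = x ++ [i] then (1:ℝ) else 0)
        = ∑ z ∈ TS d (ℓ + 1),
            pn ℓ [] z * (if ∃ x : List (Fin d), z = x ++ [i] then (1:ℝ) else 0) := by
      apply Finset.sum_subset himg
      intro z _ hz2
      by_cases hpz : pn ℓ [] z = 0
      · rw [hpz, zero_mul]
      by_cases hez : ∃ x : List (Fin d), z = x ++ [i]
      · obtain ⟨x, rfl⟩ := hez
        exfalso
        apply hz2
        apply Finset.mem_image.2
        refine ⟨x, mem_TS ?_, rfl⟩
        have hlen : ¬ ℓ < (x ++ [i]).length := fun h => hpz (hsupp ℓ _ h)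
        simp only [List.length_append, List.length_singleton] at hlen
        omega
      · rw [if_neg hez, mul_zero]
    rw [e1, ← e2,
      Finset.sum_image (by intro a _ b _ h; exact (concat_inj h).1)]
    apply Finset.sum_congr rfl
    intro x _
    rw [if_pos ⟨x, rfl⟩, mul_one]
  -- the expectation of f and the telescoping identity
  set Ef : ℕ → ℝ := fun ℓ => ∑' y : List (Fin d), pn ℓ [] y * f y with hEf_def
  have hEf0 : Ef 0 = 0 := by
    simp only [hEf_def]
    rw [tsum_eq_single ([] : List (Fin d))]
    · rw [hfnil, mul_zero]
    · intro y hy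
      rw [hpn0, if_neg fun h => hy h.symm, zero_mul]
  have hstep : ∀ ℓ : ℕ,
      Ef (ℓ + 1) = Ef ℓ + ((∑' x : List (Fin d), pn ℓ [] (x ++ [i])) - c) := by
    intro ℓ
    simp only [hEf_def]
    rw [hchap ℓ f, Finset.sum_congr rfl fun z _ => by rw [hPois z]]
    have expand : ∀ z : List (Fin d),
        pn ℓ [] z * (f z + ((if ∃ x : List (Fin d), z = x ++ [i] then (1:ℝ) else 0) - c))
          = pn ℓ [] z * f z
            + pn ℓ [] z * (if ∃ x : List (Fin d), z = x ++ [i] then (1:ℝ) else 0)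
            - c * pn ℓ [] z := by
      intro z
      ring
    rw [Finset.sum_congr rfl fun z _ => expand z, Finset.sum_sub_distrib,
      Finset.sum_add_distrib, ← Finset.mul_sum, hmass ℓ, hEA ℓ, ← hfin ℓ f]
    ring
  have htel : ∀ n : ℕ,
      ∑ ℓ ∈ Finset.range (n + 1), (∑' x : List (Fin d), pn ℓ [] (x ++ [i]))
        = c * (n + 1) + Ef (n + 1) := by
    intro n
    induction n with
    | zero =>
      rw [Finset.sum_range_one, hstep 0, hEf0]
      push_cast
      ring
    | succ k ih =>
      rw [Finset.sum_range_succ, ih, hstep (k + 1)]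
      push_cast
      ring
  -- boundedness of Ef
  have hEfb : ∀ ℓ : ℕ, |Ef ℓ| ≤ C := by
    intro ℓ
    simp only [hEf_def]
    rw [hfin ℓ f]
    calc |∑ y ∈ TS d ℓ, pn ℓ [] y * f y|
        ≤ ∑ y ∈ TS d ℓ, |pn ℓ [] y * f y| := Finset.abs_sum_le_sum_abs _ _
      _ ≤ ∑ y ∈ TS d ℓ, pn ℓ [] y * C := by
          apply Finset.sum_le_sum
          intro y _
          rw [abs_mul, abs_of_nonneg (hpn_nonneg ℓ y)]
          exact mul_le_mul_of_nonneg_left (hfb y) (hpn_nonneg ℓ y)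
      _ = C := by rw [← Finset.sum_mul, hmass ℓ, one_mul]
  have hC0 : 0 ≤ C := le_trans (abs_nonneg _) (hEfb 0)
  -- final limit argument
  have hgoal : Tendsto
      (fun n : ℕ =>
        (∑ ℓ ∈ Finset.range (n + 1), ∑' x : List (Fin d), pn ℓ [] (x ++ [i])) / (n : ℝ) - c)
      atTop (nhds 0) := by
    apply squeeze_zero_norm' (a := fun n : ℕ => (|c| + C) / (n : ℝ))
    · filter_upwards [eventually_ge_atTop 1] with n hn
      have hn0 : (n : ℝ) ≠ 0 := Nat.cast_ne_zero.2 (by omega)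
      have hn0' : (0:ℝ) < (n : ℝ) := by positivity
      have hid : (∑ ℓ ∈ Finset.range (n + 1), ∑' x : List (Fin d), pn ℓ [] (x ++ [i]))
            / (n : ℝ) - c = (c + Ef (n + 1)) / (n : ℝ) := by
        rw [htel n]
        field_simp
        ring
      rw [Real.norm_eq_abs, hid, abs_div, abs_of_pos hn0']
      gcongr
      exact le_trans (abs_add_le _ _) (add_le_add le_rfl (hEfb (n + 1)))
    · exact tendsto_const_div_atTop_nhds_zero_nat _
  have := hgoal.add_const c
  simpa using this
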